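/- Let R be a Prüfer domain and let M be a branched maximal ideal of R (i.e., M admits a proper M-primary ideal). If M is not idempotent (M ≠ M²), then M is finitely generated, hence invertible and divisorial, provided M is the radical of a finitely generated ideal. -/

import Mathlib

/-- An ideal is divisorial if `I = (R : (R : I))`, phrased via fractional ideals. -/
def IsDivisorial (R : Type*) [CommRing R] [IsDomain R] (I : Ideal R) : Prop :=
  (1 / (1 / (I : FractionalIdeal (nonZeroDivisors R) (FractionRing R))) :
    FractionalIdeal (nonZeroDivisors R) (FractionRing R))
    = (I : FractionalIdeal (nonZeroDivisors R) (FractionRing R))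

/-- An ideal is invertible if it is a unit as a fractional ideal. -/
def IsInvertibleIdeal (R : Type*) [CommRing R] [IsDomain R] (I : Ideal R) : Prop :=
  IsUnit (I : FractionalIdeal (nonZeroDivisors R) (FractionRing R))

/-- A Prüfer domain: every nonzero finitely generated ideal is invertible. -/
def IsPrufer (R : Type*) [CommRing R] [IsDomain R] : Prop :=
  ∀ I : Ideal R, I ≠ ⊥ → I.FG → IsInvertibleIdeal R I

/-- A prime `P` is sharp if it contains a finitely generated ideal contained
only in the maximal ideals that contain `P`. -/
def IsSharp (R : Type*) [CommRing R] (P : Ideal R) : Prop :=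
  ∃ I : Ideal R, I.FG ∧ I ≤ P ∧ ∀ M : Ideal R, M.IsMaximal → I ≤ M → P ≤ M

/-- A branched non-idempotent maximal ideal of a Prüfer domain that is the radical
of a finitely generated ideal is finitely generated, invertible and divisorial. -/
theorem maximal_branched_not_idempotent (R : Type*) [CommRing R] [IsDomain R]
    (hR : IsPrufer R) (M : Ideal R) (hM : M.IsMaximal)
    (hbr : ∃ Q : Ideal R, Q.IsPrimary ∧ Q.radical = M ∧ Q ≠ M)
    (hni : M * M ≠ M)
    (hrad : ∃ B : Ideal R, B.FG ∧ B.radical = M) :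
    M.FG ∧ IsInvertibleIdeal R M ∧ IsDivisorial R M := by
  classical
  obtain ⟨B, hBfg, hBrad⟩ := hrad
  set K := FractionRing R
  let f := algebraMap R K
  have hf : Function.Injective f := IsFractionRing.injective R K
  -- pick a ∈ M \ M*M
  have hMM : M * M ≤ M := Ideal.mul_le_right
  obtain ⟨a, haM, haMM⟩ : ∃ a ∈ M, a ∉ M * M := by
    obtain ⟨a, ha1, ha2⟩ := SetLike.exists_of_lt (lt_of_le_of_ne hMM hni)
    exact ⟨a, ha1, ha2⟩
  have ha0 : a ≠ 0 := fun h => haMM (h ▸ (M * M).zero_mem)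
  -- radical of M*M is M
  have hradMM : (M * M).radical = M := by
    rw [Ideal.radical_mul, Ideal.IsPrime.radical hM.isPrime, inf_idem]
  have hMMprim : (M * M).IsPrimary :=
    Ideal.isPrimary_of_isMaximal_radical (by rw [hradMM]; exact hM)
  -- the candidate finitely generated ideal C
  set C : Ideal R := B ⊔ Ideal.span {a} with hC
  have haC : a ∈ C := Ideal.mem_sup_right (Ideal.subset_span rfl)
  have hBM : B ≤ M := hBrad ▸ Ideal.le_radical
  have hCM : C ≤ M := sup_le hBM (Ideal.span_le.mpr (by simpa using haM))
  have hCrad : C.radical = M := by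
    apply le_antisymm
    · calc C.radical ≤ M.radical := Ideal.radical_mono hCM
        _ = M := Ideal.IsPrime.radical hM.isPrime
    · calc M = B.radical := hBrad.symm
        _ ≤ C.radical := Ideal.radical_mono le_sup_left
  have hCprim : C.IsPrimary := Ideal.isPrimary_of_isMaximal_radical (by rw [hCrad]; exact hM)
  -- main claim: M ≤ C
  have key : M ≤ C := by
    intro x hx
    set D : Ideal R := Ideal.span {a, x} with hD
    have haD : a ∈ D := Ideal.subset_span (by simp)
    have hxD : x ∈ D := Ideal.subset_span (by simp)
    have hD0 : D ≠ ⊥ := fun h => ha0 ((Submodule.mem_bot R).mp (h ▸ haD))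
    have hDfg : D.FG := ⟨{a, x}, by simp [hD]⟩
    obtain ⟨u, hu⟩ := hR D hD0 hDfg
    set E : FractionalIdeal (nonZeroDivisors R) (FractionRing R) := ↑u⁻¹ with hE
    have hDE : (D : FractionalIdeal (nonZeroDivisors R) (FractionRing R)) * E = 1 := by
      rw [hE, ← hu, ← Units.val_mul, mul_inv_cancel, Units.val_one]
    -- decompose the coercion of D
    have hDcoe : (D : FractionalIdeal (nonZeroDivisors R) (FractionRing R)) =
        FractionalIdeal.spanSingleton (nonZeroDivisors R) (f a) +
          FractionalIdeal.spanSingleton (nonZeroDivisors R) (f x) := by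
      rw [hD, show ({a, x} : Set R) = insert a {x} from rfl, Ideal.span_insert,
        FractionalIdeal.coeIdeal_sup, FractionalIdeal.coeIdeal_span_singleton,
        FractionalIdeal.coeIdeal_span_singleton]
    have h1 : (1 : K) ∈
        FractionalIdeal.spanSingleton (nonZeroDivisors R) (f a) * E +
          FractionalIdeal.spanSingleton (nonZeroDivisors R) (f x) * E := by
      rw [← add_mul, ← hDcoe, hDE]
      exact FractionalIdeal.one_mem_one _
    obtain ⟨y, hy, z, hz, hyz⟩ := (FractionalIdeal.mem_add _ _ _).mp h1
    obtain ⟨p, hpE, rfl⟩ := FractionalIdeal.mem_singleton_mul.mp hy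
    obtain ⟨q, hqE, rfl⟩ := FractionalIdeal.mem_singleton_mul.mp hz
    -- products of elements of D with elements of E are in R
    have prod : ∀ c ∈ D, ∀ w ∈ E, ∃ r : R, f r = f c * w := by
      intro c hc w hw
      have : f c * w ∈ (D : FractionalIdeal (nonZeroDivisors R) (FractionRing R)) * E :=
        FractionalIdeal.mul_mem_mul (FractionalIdeal.mem_coeIdeal_of_mem _ hc) hw
      rw [hDE] at this
      exact (FractionalIdeal.mem_one_iff _).mp this
    obtain ⟨r, hr⟩ := prod a haD p hpE
    obtain ⟨t, ht⟩ := prod x hxD p hpE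
    obtain ⟨w, hw⟩ := prod a haD q hqE
    obtain ⟨s, hs⟩ := prod x hxD q hqE
    -- the key algebraic identities
    have hrs : r + s = 1 := hf (by rw [map_add, hr, hs, map_one, hyz])
    have hxr : x * r = t * a := hf (by rw [map_mul, map_mul, hr, ht]; ring)
    have has : a * s = w * x := hf (by rw [map_mul, map_mul, hs, hw]; ring)
    -- case analysis using primary ideals
    have hxrC : x * r ∈ C := hxr ▸ Ideal.mul_mem_left _ t haC
    rcases (Ideal.isPrimary_iff.mp hCprim).2 hxrC with hxC | hrM
    · exact hxC
    rw [hCrad] at hrM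
    have hsM : s ∉ M := fun hsM =>
      hM.ne_top (Ideal.eq_top_of_isUnit_mem _ (hrs ▸ M.add_mem hrM hsM) isUnit_one)
    by_cases hwM : w ∈ M
    · exfalso
      have : a * s ∈ M * M := has ▸ Ideal.mul_mem_mul hwM hx
      rcases (Ideal.isPrimary_iff.mp hMMprim).2 this with h | h
      · exact haMM h
      · exact hsM (hradMM ▸ h)
    · have hxwC : x * w ∈ C := by
        rw [mul_comm, ← has]; exact Ideal.mul_mem_right _ _ haC
      rcases (Ideal.isPrimary_iff.mp hCprim).2 hxwC with hxC | h
      · exact hxC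
      · exact absurd (hCrad ▸ h) hwM
  have hMC : M = C := le_antisymm key hCM
  have hMfg : M.FG := hMC ▸ Submodule.FG.sup hBfg ⟨{a}, by simp⟩
  have hM0 : M ≠ ⊥ := fun h => ha0 ((Submodule.mem_bot R).mp (h ▸ haM))
  have hinv : IsInvertibleIdeal R M := hR M hM0 hMfg
  refine ⟨hMfg, hinv, ?_⟩
  obtain ⟨u, hu⟩ := hinv
  have h1 : (M : FractionalIdeal (nonZeroDivisors R) (FractionRing R)) * ↑u⁻¹ = 1 := by
    rw [← hu, ← Units.val_mul, mul_inv_cancel, Units.val_one]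
  have h2 : (↑u⁻¹ : FractionalIdeal (nonZeroDivisors R) (FractionRing R)) * ↑M = 1 := by
    rw [mul_comm]; exact h1
  have e1 : (↑u⁻¹ : FractionalIdeal (nonZeroDivisors R) (FractionRing R)) = 1 / ↑M :=
    FractionalIdeal.eq_one_div_of_mul_eq_one_right _ _ h1
  have e2 : (M : FractionalIdeal (nonZeroDivisors R) (FractionRing R)) = 1 / ↑u⁻¹ :=
    FractionalIdeal.eq_one_div_of_mul_eq_one_right _ _ h2
  unfold IsDivisorial
  rw [← e1, ← e2]
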